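/- Let G be a graph with vertex cover V_k of size k, and let M(G, V_k) be the graph obtained from G by adding, for each nonempty subset X ⊆ V_k, a new vertex M_X adjacent exactly to the vertices of X. Then for every potential maximal clique Ω of M(G, V_k), the set V_k intersects at most three distinct connected components of M(G, V_k) \ Ω. -/

import Mathlib

/-- The graph `H` with vertices of `Ω` made isolated (edges within `V \ Ω`). -/
def restrict {V : Type*} (H : SimpleGraph V) (Ω : Set V) : SimpleGraph V where
  Adj a b := H.Adj a b ∧ a ∉ Ω ∧ b ∉ Ω
  symm := ⟨fun _ _ ⟨h, ha, hb⟩ => ⟨h.symm, hb, ha⟩⟩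
  loopless := ⟨fun a h => H.irrefl h.1⟩

/-- `C` is the vertex set of a connected component of `H \ Ω`. -/
def IsCompOf {V : Type*} (H : SimpleGraph V) (Ω C : Set V) : Prop :=
  ∃ a, a ∉ Ω ∧ C = {b | b ∉ Ω ∧ (restrict H Ω).Reachable a b}

/-- Neighborhood of a vertex set: vertices outside `C` adjacent to some vertex of `C`. -/
def nbhd {V : Type*} (H : SimpleGraph V) (C : Set V) : Set V :=
  {w | w ∉ C ∧ ∃ c ∈ C, H.Adj w c}

/-- `Ω` is a potential maximal clique of `H`. -/
def IsPMC {V : Type*} (H : SimpleGraph V) (Ω : Set V) : Prop :=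
  (∀ C, IsCompOf H Ω C → nbhd H C ≠ Ω) ∧
  (∀ u ∈ Ω, ∀ v ∈ Ω, u ≠ v →
    H.Adj u v ∨ ∃ C, IsCompOf H Ω C ∧ u ∈ nbhd H C ∧ v ∈ nbhd H C)

/-- A PMC is free if every vertex of `Ω` has a neighbor outside `Ω`. -/
def IsFree {V : Type*} (H : SimpleGraph V) (Ω : Set V) : Prop :=
  ∀ v ∈ Ω, ∃ w, w ∉ Ω ∧ H.Adj v w

/-- `G` together with a vertex `M_X` for each nonempty `X ⊆ Vk`, adjacent exactly to `X`. -/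
def Mgraph {V : Type*} (G : SimpleGraph V) (Vk : Set V) :
    SimpleGraph (V ⊕ {X : Set V // X ⊆ Vk ∧ X.Nonempty}) where
  Adj a b := match a, b with
    | .inl u, .inl w => G.Adj u w
    | .inl u, .inr X => u ∈ X.val
    | .inr X, .inl u => u ∈ X.val
    | .inr _, .inr _ => False
  symm := ⟨by rintro (u|X) (w|Y) h <;> simp_all <;> exact h.symm⟩
  loopless := ⟨by rintro (u|X) h <;> simp_all⟩

section Aux

variable {W : Type*} {H : SimpleGraph W} {Ω C C' : Set W}

lemma comp_eq (hC : IsCompOf H Ω C) {x : W} (hx : x ∈ C) :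
    C = {b | b ∉ Ω ∧ (restrict H Ω).Reachable x b} := by
  obtain ⟨a, _, rfl⟩ := hC
  obtain ⟨hxΩ, hax⟩ := hx
  ext b
  exact ⟨fun ⟨h1, h2⟩ => ⟨h1, hax.symm.trans h2⟩, fun ⟨h1, h2⟩ => ⟨h1, hax.trans h2⟩⟩

lemma comp_eq_of_mem (hC : IsCompOf H Ω C) (hC' : IsCompOf H Ω C') {x : W}
    (hx : x ∈ C) (hx' : x ∈ C') : C = C' :=
  (comp_eq hC hx).trans (comp_eq hC' hx').symm

lemma notOmega_of_mem (hC : IsCompOf H Ω C) {x : W} (hx : x ∈ C) : x ∉ Ω := by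
  obtain ⟨a, _, rfl⟩ := hC; exact hx.1

lemma mem_of_adj (hC : IsCompOf H Ω C) {x y : W} (hx : x ∈ C) (hy : y ∉ Ω)
    (hadj : H.Adj x y) : y ∈ C := by
  rw [comp_eq hC hx]
  exact ⟨hy, SimpleGraph.Adj.reachable ⟨hadj, notOmega_of_mem hC hx, hy⟩⟩

/-- extract four distinct elements from a set of ncard > 3 -/
lemma four_distinct {α : Type*} {S : Set α} (h : 3 < S.ncard) :
    ∃ a ∈ S, ∃ b ∈ S, ∃ c ∈ S, ∃ d ∈ S,
      a ≠ b ∧ a ≠ c ∧ a ≠ d ∧ b ≠ c ∧ b ≠ d ∧ c ≠ d := by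
  have hfin : S.Finite := by
    by_contra hinf
    rw [Set.Infinite.ncard hinf] at h; omega
  obtain ⟨a, ha⟩ : S.Nonempty := Set.nonempty_of_ncard_ne_zero (by omega)
  have h1 : 2 < (S \ ({a} : Set α)).ncard := by
    rw [Set.ncard_diff_singleton_of_mem ha]; omega
  obtain ⟨b, hb⟩ : (S \ ({a} : Set α)).Nonempty :=
    Set.nonempty_of_ncard_ne_zero (by omega)
  have h2 : 1 < ((S \ ({a} : Set α)) \ ({b} : Set α)).ncard := by
    rw [Set.ncard_diff_singleton_of_mem hb]; omega
  obtain ⟨c, hc⟩ : ((S \ ({a} : Set α)) \ ({b} : Set α)).Nonempty :=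
    Set.nonempty_of_ncard_ne_zero (by omega)
  have h3 : 0 < (((S \ ({a} : Set α)) \ ({b} : Set α)) \ ({c} : Set α)).ncard := by
    rw [Set.ncard_diff_singleton_of_mem hc]; omega
  obtain ⟨d, hd⟩ : (((S \ ({a} : Set α)) \ ({b} : Set α)) \ ({c} : Set α)).Nonempty :=
    Set.nonempty_of_ncard_ne_zero (by omega)
  refine ⟨a, ha, b, hb.1, c, hc.1.1, d, hd.1.1.1, ?_, ?_, ?_, ?_, ?_, ?_⟩
  · exact fun e => hb.2 e.symm
  · exact fun e => hc.1.2 e.symm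
  · exact fun e => hd.1.1.2 e.symm
  · exact fun e => hc.2 e.symm
  · exact fun e => hd.1.2 e.symm
  · exact fun e => hd.2 e.symm

end Aux

section MAux

variable {V : Type*} {G : SimpleGraph V} {Vk : Set V}
  {Ω : Set (V ⊕ {X : Set V // X ⊆ Vk ∧ X.Nonempty})}

lemma mgraph_adj_inr {X : {X : Set V // X ⊆ Vk ∧ X.Nonempty}}
    {b : V ⊕ {X : Set V // X ⊆ Vk ∧ X.Nonempty}}
    (h : (Mgraph G Vk).Adj (Sum.inr X) b) : ∃ u ∈ X.val, b = Sum.inl u := by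
  cases b with
  | inl u => exact ⟨u, h, rfl⟩
  | inr Y => exact absurd h (by simp [Mgraph])

/-- If two distinct components contain `v1`, `v2` resp., then `M_{v1,v2} ∈ Ω`. -/
lemma mpair_mem_Omega {C1 C2 : Set (V ⊕ {X : Set V // X ⊆ Vk ∧ X.Nonempty})}
    (hC1 : IsCompOf (Mgraph G Vk) Ω C1) (hC2 : IsCompOf (Mgraph G Vk) Ω C2)
    (hne : C1 ≠ C2) {v1 v2 : V}
    (hv1 : Sum.inl v1 ∈ C1) (hv2 : Sum.inl v2 ∈ C2)
    (hsub : ({v1, v2} : Set V) ⊆ Vk ∧ ({v1, v2} : Set V).Nonempty) :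
    (Sum.inr ⟨{v1, v2}, hsub⟩ :
      V ⊕ {X : Set V // X ⊆ Vk ∧ X.Nonempty}) ∈ Ω := by
  by_contra hm
  have ha1 : (Mgraph G Vk).Adj (Sum.inl v1)
      (Sum.inr ⟨{v1, v2}, hsub⟩) := by simp [Mgraph]
  have ha2 : (Mgraph G Vk).Adj (Sum.inl v2)
      (Sum.inr ⟨{v1, v2}, hsub⟩) := by simp [Mgraph]
  exact hne (comp_eq_of_mem hC1 hC2 (mem_of_adj hC1 hv1 hm ha1)
    (mem_of_adj hC2 hv2 hm ha2))

/-- If `M_{v1,v2} ∈ nbhd C` for a component `C`, then `C = C1` or `C = C2`. -/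
lemma nbhd_mpair {C1 C2 C : Set (V ⊕ {X : Set V // X ⊆ Vk ∧ X.Nonempty})}
    (hC1 : IsCompOf (Mgraph G Vk) Ω C1) (hC2 : IsCompOf (Mgraph G Vk) Ω C2)
    (hC : IsCompOf (Mgraph G Vk) Ω C)
    {v1 v2 : V} (hv1 : Sum.inl v1 ∈ C1) (hv2 : Sum.inl v2 ∈ C2)
    {hsub : ({v1, v2} : Set V) ⊆ Vk ∧ ({v1, v2} : Set V).Nonempty}
    (h : (Sum.inr ⟨{v1, v2}, hsub⟩ :
        V ⊕ {X : Set V // X ⊆ Vk ∧ X.Nonempty}) ∈ nbhd (Mgraph G Vk) C) :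
    C = C1 ∨ C = C2 := by
  obtain ⟨_, c, hcC, hadj⟩ := h
  obtain ⟨u, hu, rfl⟩ := mgraph_adj_inr hadj
  rcases hu with rfl | rfl
  · exact Or.inl (comp_eq_of_mem hC hC1 hcC hv1)
  · exact Or.inr (comp_eq_of_mem hC hC2 hcC hv2)

end MAux

theorem stmt2 {V : Type*} [Fintype V] (G : SimpleGraph V) (Vk : Set V) (k : ℕ)
    (hcard : Vk.ncard = k)
    (hvc : ∀ a b, G.Adj a b → a ∈ Vk ∨ b ∈ Vk)
    (Ω : Set (V ⊕ {X : Set V // X ⊆ Vk ∧ X.Nonempty}))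
    (hΩ : IsPMC (Mgraph G Vk) Ω) :
    {C | IsCompOf (Mgraph G Vk) Ω C ∧ ∃ v ∈ Vk, Sum.inl v ∈ C}.ncard ≤ 3 := by
  by_contra h
  push_neg at h
  obtain ⟨C1, ⟨hC1, v1, hv1k, hv1⟩, C2, ⟨hC2, v2, hv2k, hv2⟩,
    C3, ⟨hC3, v3, hv3k, hv3⟩, C4, ⟨hC4, v4, hv4k, hv4⟩,
    h12, h13, h14, h23, h24, h34⟩ := four_distinct h
  -- the two middle vertices
  have hsub12 : ({v1, v2} : Set V) ⊆ Vk ∧ ({v1, v2} : Set V).Nonempty :=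
    ⟨fun x hx => by rcases hx with rfl | rfl <;> assumption, ⟨v1, by simp⟩⟩
  have hsub34 : ({v3, v4} : Set V) ⊆ Vk ∧ ({v3, v4} : Set V).Nonempty :=
    ⟨fun x hx => by rcases hx with rfl | rfl <;> assumption, ⟨v3, by simp⟩⟩
  have hm12 := mpair_mem_Omega hC1 hC2 h12 hv1 hv2 hsub12
  have hm34 := mpair_mem_Omega hC3 hC4 h34 hv3 hv4 hsub34
  have hne : (Sum.inr ⟨{v1, v2}, hsub12⟩ : V ⊕ {X : Set V // X ⊆ Vk ∧ X.Nonempty}) ≠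
      Sum.inr ⟨{v3, v4}, hsub34⟩ := by
    intro e
    have hset : ({v1, v2} : Set V) = {v3, v4} := congrArg Subtype.val (Sum.inr.inj e)
    have hv3m : v3 ∈ ({v1, v2} : Set V) := hset ▸ (by simp : v3 ∈ ({v3, v4} : Set V))
    rcases hv3m with rfl | rfl
    · exact h13 (comp_eq_of_mem hC1 hC3 hv1 hv3)
    · exact h23 (comp_eq_of_mem hC2 hC3 hv2 hv3)
  rcases hΩ.2 _ hm12 _ hm34 hne with hadj | ⟨C, hC, hn12, hn34⟩
  · exact (by simp [Mgraph] at hadj : False)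
  · rcases nbhd_mpair hC1 hC2 hC hv1 hv2 hn12 with rfl | rfl <;>
    rcases nbhd_mpair hC3 hC4 hC hv3 hv4 hn34 with e | e
    · exact h13 e
    · exact h14 e
    · exact h23 e
    · exact h24 e
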